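/- arXiv:2205.14436 — 2 statements merged into one kernel-verified Lean document; each statement's English description precedes it below -/
import Mathlib

section
/- The Hilbert series of the Stanley-Reisner ring k[F] of a quasi-forest F = F_1 ∪ ⋯ ∪ F_k, where each F_i is a simplex of dimension d_i and G_i = (F_1 ∪ ⋯ ∪ F_{i-1}) ∩ F_i is a simplex of dimension r_i (for 2 ≤ i ≤ k), equals ∑_{i=1}^k 1/(1-t)^{d_i+1} − ∑_{i=2}^k 1/(1-t)^{r_i+1}. -/
/-- Data of a quasi-forest on vertex type `V`: an ordered list of facets
`F 0, …, F (k-1)` of a simplicial complex, where each facet meets the union of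
the previous ones in a subset of one of them (so the intersection is a common
face, i.e. a simplex, possibly empty), and no facet is contained in another. -/
structure QuasiForest (V : Type*) [DecidableEq V] (k : ℕ) where
  F : Fin k → Finset V
  facet : ∀ i j : Fin k, i ≠ j → ¬ F i ⊆ F j
  attach : ∀ i : Fin k, 0 < (i : ℕ) →
    ∃ j < i, ((Finset.univ.filter (fun j : Fin k => j < i)).biUnion F) ∩ F i ⊆ F j

namespace QuasiForest
open scoped Classical

variable {V : Type*} [DecidableEq V] {k : ℕ} (Q : QuasiForest V k)

/-- The attachment face `G i = (F 0 ∪ ⋯ ∪ F (i-1)) ∩ F i`. -/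
def G (i : Fin k) : Finset V :=
  ((Finset.univ.filter (fun j : Fin k => j < i)).biUnion Q.F) ∩ Q.F i

/-- The faces of the quasi-forest: all subsets of the facets. -/
def faces : Set (Finset V) := {s | ∃ i, s ⊆ Q.F i}

/-- The vertex set of the quasi-forest. -/
def verts : Finset V := Finset.univ.biUnion Q.F

/-- `minG = r + 1`, the minimal number of vertices of an attachment face
(`r = min rᵢ` is its minimal dimension). -/
noncomputable def minG : ℕ := sInf {n | ∃ i : Fin k, 0 < (i : ℕ) ∧ (Q.G i).card = n}

/-- The non-neighbours of `v` among the vertices: the neighbours of `v` in the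
complement of the 1-skeleton. -/
noncomputable def nonNbrs [Fintype V] (v : V) : Finset V :=
  (Q.verts.erase v).filter (fun u => ({v, u} : Finset V) ∉ Q.faces)


end QuasiForest

/-- The Stanley–Reisner ideal of a simplicial complex `Δ` (given by its set of
faces): generated by the squarefree monomials corresponding to non-faces. -/
noncomputable def SRIdeal (kk : Type*) [Field kk] {V : Type*} (Δ : Set (Finset V)) :
    Ideal (MvPolynomial V kk) :=
  Ideal.span {m | ∃ s : Finset V, s ∉ Δ ∧ m = ∏ v ∈ s, MvPolynomial.X v}

/-- The Stanley–Reisner ring `k[Δ]`. -/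
abbrev SRRing (kk : Type*) [Field kk] {V : Type*} (Δ : Set (Finset V)) :=
  MvPolynomial V kk ⧸ SRIdeal kk Δ

open CategoryTheory in
/-- The projective dimension of a module: the least `n` (possibly `⊤`, i.e. no
such `n`) such that `M` admits a projective resolution of length `n`. -/
noncomputable def projDim (R : Type*) [Ring R] (M : ModuleCat R) : ℕ∞ :=
  sInf {n : ℕ∞ | ∃ P : ProjectiveResolution M,
    ∀ i : ℕ, n < (i : ℕ∞) → Limits.IsZero (P.complex.X i)}

/-- The `I`-depth of a module `M`: the supremum of lengths of `M`-regular
sequences with entries in `I`. -/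
noncomputable def idealDepth {R : Type*} [CommRing R] (I : Ideal R)
    (M : Type*) [AddCommGroup M] [Module R M] : ℕ∞ :=
  sSup {n : ℕ∞ | ∃ rs : List R, (rs.length : ℕ∞) = n ∧ (∀ x ∈ rs, x ∈ I) ∧
    RingTheory.Sequence.IsRegular M rs}

/-- The irrelevant maximal ideal of a polynomial ring. -/
noncomputable def irrel (kk : Type*) [Field kk] (V : Type*) : Ideal (MvPolynomial V kk) :=
  Ideal.span (Set.range MvPolynomial.X)

/-- The dimension over `k` of the `i`-th graded piece of `S/I`. -/
noncomputable def hilbertCoeff (kk : Type*) [Field kk] {V : Type*}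
    (I : Ideal (MvPolynomial V kk)) (i : ℕ) : ℕ :=
  Module.finrank kk (Submodule.map (Ideal.Quotient.mkₐ kk I).toLinearMap
    (MvPolynomial.homogeneousSubmodule V kk i))

/-- The Hilbert series `∑ᵢ dim_k (S/I)ᵢ tⁱ` of `S/I`, as a power series over `ℚ`. -/
noncomputable def hilbertSeries (kk : Type*) [Field kk] {V : Type*}
    (I : Ideal (MvPolynomial V kk)) : PowerSeries ℚ :=
  PowerSeries.mk fun i => (hilbertCoeff kk I i : ℚ)



section HilbertAux

set_option linter.unusedSectionVars false

variable {V : Type*} [DecidableEq V]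

section CntAux
open PowerSeries



variable {V : Type*} [DecidableEq V]

lemma finsuppAntidiag_zero (s : Finset V) : Finset.finsuppAntidiag s 0 = {0} := by
  ext f
  simp only [Finset.mem_finsuppAntidiag', Finset.mem_singleton]
  constructor
  · rintro ⟨h0, -⟩
    exact (Finsupp.degree_eq_zero_iff f).1 h0
  · rintro rfl
    simp [Finsupp.degree]

lemma sumid_add (f g : V →₀ ℕ) :
    ((f + g).sum fun _ x => x) = (f.sum fun _ x => x) + (g.sum fun _ x => x) :=
  Finsupp.sum_add_index' (fun _ => rfl) (fun _ _ _ => rfl)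

lemma filter_apply_eq_zero (a : V) (s : Finset V) (h : a ∉ s) (n : ℕ) :
    (Finset.finsuppAntidiag (insert a s) n).filter (fun f => f a = 0)
      = Finset.finsuppAntidiag s n := by
  ext f
  simp only [Finset.mem_filter, Finset.mem_finsuppAntidiag']
  constructor
  · rintro ⟨⟨hsum, hsupp⟩, ha⟩
    refine ⟨hsum, fun x hx => ?_⟩
    rcases Finset.mem_insert.1 (hsupp hx) with rfl | hxs
    · exact absurd (Finsupp.mem_support_iff.1 hx) (by simp [ha])
    · exact hxs
  · rintro ⟨hsum, hsupp⟩
    refine ⟨⟨hsum, hsupp.trans (Finset.subset_insert a s)⟩, ?_⟩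
    by_contra ha
    exact h (hsupp (Finsupp.mem_support_iff.2 ha))

lemma card_filter_pos (a : V) (s : Finset V) (n : ℕ) :
    ((Finset.finsuppAntidiag (insert a s) (n+1)).filter (fun f => f a ≠ 0)).card
      = (Finset.finsuppAntidiag (insert a s) n).card := by
  symm
  apply Finset.card_bij (fun g _ => g + Finsupp.single a 1)
  · intro g hg
    rw [Finset.mem_finsuppAntidiag'] at hg
    rw [Finset.mem_filter, Finset.mem_finsuppAntidiag']
    refine ⟨⟨?_, ?_⟩, ?_⟩
    · rw [sumid_add, hg.1, Finsupp.sum_single_index rfl]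
    · refine Finsupp.support_add.trans ?_
      exact Finset.union_subset hg.2 (Finsupp.support_single_subset.trans
        (Finset.singleton_subset_iff.2 (Finset.mem_insert_self a s)))
    · intro h0
      have h0' : g a + (Finsupp.single a 1) a = 0 := by
        rw [← Finsupp.add_apply, h0]
      rw [Finsupp.single_eq_same] at h0'
      omega
  · intro g1 h1 g2 h2 h
    exact add_right_cancel h
  · intro f hf
    rw [Finset.mem_filter, Finset.mem_finsuppAntidiag'] at hf
    have hle : Finsupp.single a 1 ≤ f :=
      Finsupp.single_le_iff.mpr (Nat.one_le_iff_ne_zero.2 hf.2)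
    refine ⟨f - Finsupp.single a 1, ?_, ?_⟩
    · rw [Finset.mem_finsuppAntidiag']
      constructor
      · have := sumid_add (f - Finsupp.single a 1) (Finsupp.single a 1)
        rw [tsub_add_cancel_of_le hle, hf.1.1, Finsupp.sum_single_index rfl] at this
        omega
      · exact (Finsupp.support_tsub).trans hf.1.2
    · exact tsub_add_cancel_of_le hle

lemma card_insert_succ (a : V) (s : Finset V) (h : a ∉ s) (n : ℕ) :
    (Finset.finsuppAntidiag (insert a s) (n+1)).card
      = (Finset.finsuppAntidiag s (n+1)).card
        + (Finset.finsuppAntidiag (insert a s) n).card := by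
  rw [← filter_apply_eq_zero a s h (n+1), ← card_filter_pos a s n]
  rw [Finset.card_filter_add_card_filter_not]

noncomputable def cnt (s : Finset V) : PowerSeries ℚ :=
  PowerSeries.mk fun n => ((Finset.finsuppAntidiag s n).card : ℚ)

lemma cnt_mul_one_sub (a : V) (s : Finset V) (h : a ∉ s) :
    (1 - PowerSeries.X) * cnt (insert a s) = cnt s := by
  ext n
  rw [sub_mul, one_mul, map_sub]
  cases n with
  | zero => simp [cnt, coeff_zero_X_mul, finsuppAntidiag_zero]
  | succ m =>
      rw [coeff_succ_X_mul]
      simp only [cnt, PowerSeries.coeff_mk]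
      rw [card_insert_succ a s h m]
      push_cast
      ring

lemma one_sub_pow_mul_cnt (s : Finset V) :
    (1 - PowerSeries.X) ^ s.card * cnt s = 1 := by
  induction s using Finset.induction_on with
  | empty =>
      have : cnt (∅ : Finset V) = 1 := by
        ext n
        cases n with
        | zero => simp [cnt, finsuppAntidiag_zero]
        | succ m => simp [cnt, Finset.finsuppAntidiag_empty_of_ne_zero (Nat.succ_ne_zero m)]
      simp [this]
  | @insert a s ha ih =>
      rw [Finset.card_insert_of_notMem ha, pow_succ, mul_assoc,
        cnt_mul_one_sub a s ha, ih]

lemma cnt_eq (s : Finset V) :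
    cnt s = ((1 - PowerSeries.X : PowerSeries ℚ))⁻¹ ^ s.card := by
  have hu : (1 - PowerSeries.X : PowerSeries ℚ) * (1 - PowerSeries.X)⁻¹ = 1 := by
    apply PowerSeries.mul_inv_cancel
    simp
  have h2 : (1 - PowerSeries.X : PowerSeries ℚ) ^ s.card
      * ((1 - PowerSeries.X : PowerSeries ℚ))⁻¹ ^ s.card = 1 := by
    rw [← mul_pow, hu, one_pow]
  calc cnt s = cnt s * ((1 - PowerSeries.X : PowerSeries ℚ) ^ s.card
        * ((1 - PowerSeries.X : PowerSeries ℚ))⁻¹ ^ s.card) := by rw [h2, mul_one]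
    _ = ((1 - PowerSeries.X : PowerSeries ℚ) ^ s.card * cnt s)
        * ((1 - PowerSeries.X : PowerSeries ℚ))⁻¹ ^ s.card := by ring
    _ = _ := by rw [one_sub_pow_mul_cnt, one_mul]

end CntAux

section SRAux
open MvPolynomial


variable {V : Type*} [DecidableEq V]

/-- the exponent finsupp of a squarefree monomial -/
noncomputable def ind (s : Finset V) : V →₀ ℕ := ∑ v ∈ s, Finsupp.single v 1

lemma ind_support (s : Finset V) : (ind s).support = s := by
  classical
  induction s using Finset.induction_on with
  | empty => simp [ind]
  | @insert a s ha ih =>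
      rw [ind, Finset.sum_insert ha, Finsupp.support_add_eq, ← ind, ih,
        Finsupp.support_single_ne_zero a one_ne_zero]
      · rfl
      · rw [Finsupp.support_single_ne_zero a one_ne_zero, ← ind, ih]
        simpa using ha

lemma ind_apply (s : Finset V) (v : V) : ind s v = if v ∈ s then 1 else 0 := by
  classical
  rw [ind, Finsupp.finset_sum_apply]
  simp [Finsupp.single_apply]

lemma ind_le_iff (s : Finset V) (d : V →₀ ℕ) : ind s ≤ d ↔ s ⊆ d.support := by
  classical
  constructor
  · intro h v hv
    have hv' := h v
    rw [ind_apply, if_pos hv] at hv'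
    rw [Finsupp.mem_support_iff]
    omega
  · intro h v
    rw [ind_apply]
    split_ifs with hvs
    · have : d v ≠ 0 := Finsupp.mem_support_iff.1 (h hvs)
      omega
    · exact Nat.zero_le _

lemma ind_insert (a : V) (s : Finset V) (ha : a ∉ s) :
    ind (insert a s) = Finsupp.single a 1 + ind s := by
  rw [ind, Finset.sum_insert ha, ind]

lemma prod_X_eq (kk : Type*) [Field kk] (s : Finset V) :
    (∏ v ∈ s, (MvPolynomial.X v : MvPolynomial V kk)) = monomial (ind s) 1 := by
  classical
  induction s using Finset.induction_on with
  | empty => simp [ind, monomial_zero', C_1]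
  | @insert a s ha ih =>
      rw [Finset.prod_insert ha, ih, ind_insert a s ha, X, monomial_mul, one_mul]

lemma coeff_eq_zero_of_mem_SRIdeal (kk : Type*) [Field kk] {Δ : Set (Finset V)}
    (hΔ : ∀ s t : Finset V, s ⊆ t → t ∈ Δ → s ∈ Δ)
    {p : MvPolynomial V kk} (hp : p ∈ SRIdeal kk Δ) :
    ∀ d : V →₀ ℕ, d.support ∈ Δ → MvPolynomial.coeff d p = 0 := by
  classical
  rw [SRIdeal, Ideal.span] at hp
  induction hp using Submodule.span_induction with
  | mem x hx =>
      intro d hd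
      obtain ⟨s, hs, rfl⟩ := hx
      rw [prod_X_eq, coeff_monomial]
      have : d ≠ ind s := by
        rintro rfl
        rw [ind_support] at hd
        exact hs hd
      rw [if_neg (fun h => this h.symm)]
  | zero => simp
  | add x y hx hy ihx ihy =>
      intro d hd
      rw [coeff_add, ihx d hd, ihy d hd, add_zero]
  | smul r x hx ih =>
      intro d hd
      rw [smul_eq_mul, coeff_mul]
      apply Finset.sum_eq_zero
      rintro ⟨a, b⟩ hab
      rw [Finset.HasAntidiagonal.mem_antidiagonal] at hab
      have hble : b ≤ d := by
        intro v
        have : a v + b v = d v := by rw [← hab]; rfl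
        omega
      have : b.support ∈ Δ := hΔ _ _ (Finsupp.support_mono hble) hd
      have hb0 : coeff b x = 0 := ih b this
      simp only [hb0, mul_zero]

lemma monomial_mem_SRIdeal (kk : Type*) [Field kk] {Δ : Set (Finset V)}
    {d : V →₀ ℕ} (hd : d.support ∉ Δ) (c : kk) :
    monomial d c ∈ SRIdeal kk Δ := by
  classical
  have hle : ind d.support ≤ d := by
    rw [ind_le_iff]
  have : monomial d c = monomial (d - ind d.support) c * ∏ v ∈ d.support, X v := by
    rw [prod_X_eq, monomial_mul, mul_one, tsub_add_cancel_of_le hle]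
  rw [this]
  exact Ideal.mul_mem_left _ _ (Ideal.subset_span ⟨d.support, hd, rfl⟩)

lemma map_homog_eq_span (kk : Type*) [Field kk] {Δ : Set (Finset V)} (n : ℕ)
    (Dn : Finset (V →₀ ℕ))
    (hDn : ∀ d : V →₀ ℕ, d ∈ Dn ↔ Finsupp.degree d = n ∧ d.support ∈ Δ) :
    Submodule.map (Ideal.Quotient.mkₐ kk (SRIdeal kk Δ)).toLinearMap
      (MvPolynomial.homogeneousSubmodule V kk n)
    = Submodule.span kk
        ((fun d => Ideal.Quotient.mkₐ kk (SRIdeal kk Δ) (monomial d 1)) '' ↑Dn) := by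
  classical
  rw [homogeneousSubmodule_eq_finsupp_supported, AddMonoidAlgebra.supported_eq_span_single,
    Submodule.map_span]
  apply le_antisymm
  · rw [Submodule.span_le]
    rintro x ⟨y, ⟨d, hd, rfl⟩, rfl⟩
    simp only [Set.mem_setOf_eq] at hd
    by_cases hs : d.support ∈ Δ
    · apply Submodule.subset_span
      exact ⟨d, (hDn d).2 ⟨hd, hs⟩, by simp [single_eq_monomial]⟩
    · have : (Ideal.Quotient.mkₐ kk (SRIdeal kk Δ)).toLinearMap (AddMonoidAlgebra.single d 1) = 0 := by
        rw [single_eq_monomial]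
        show Ideal.Quotient.mkₐ kk (SRIdeal kk Δ) (monomial d 1) = 0
        rw [Ideal.Quotient.mkₐ_eq_mk, Ideal.Quotient.eq_zero_iff_mem]
        exact monomial_mem_SRIdeal kk hs 1
      rw [this]
      exact Submodule.zero_mem _
  · apply Submodule.span_mono
    rintro x ⟨d, hd, rfl⟩
    exact ⟨AddMonoidAlgebra.single d 1, ⟨d, ((hDn d).1 hd).1, rfl⟩, by simp [single_eq_monomial]⟩

lemma linearIndependent_mk_monomial (kk : Type*) [Field kk] {Δ : Set (Finset V)}
    (hΔ : ∀ s t : Finset V, s ⊆ t → t ∈ Δ → s ∈ Δ)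
    (Dn : Finset (V →₀ ℕ)) (hDn : ∀ d : V →₀ ℕ, d ∈ Dn → d.support ∈ Δ) :
    LinearIndependent kk
      (fun d : {x // x ∈ Dn} =>
        Ideal.Quotient.mkₐ kk (SRIdeal kk Δ) (monomial (d : V →₀ ℕ) 1)) := by
  classical
  rw [Fintype.linearIndependent_iff]
  intro g hg
  set p : MvPolynomial V kk := ∑ d : {x // x ∈ Dn}, monomial (d : V →₀ ℕ) (g d) with hp
  have hmk : Ideal.Quotient.mkₐ kk (SRIdeal kk Δ) p = 0 := by
    rw [hp, map_sum, ← hg]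
    apply Finset.sum_congr rfl
    intro d _
    rw [← map_smul, smul_monomial, smul_eq_mul, mul_one]
  have hpI : p ∈ SRIdeal kk Δ := by
    rw [Ideal.Quotient.mkₐ_eq_mk, Ideal.Quotient.eq_zero_iff_mem] at hmk
    exact hmk
  intro d0
  have hc : coeff (d0 : V →₀ ℕ) p = g d0 := by
    rw [hp, coeff_sum]
    rw [Finset.sum_eq_single d0]
    · rw [coeff_monomial, if_pos rfl]
    · intro d _ hne
      rw [coeff_monomial, if_neg]
      intro h
      exact hne (Subtype.ext h)
    · intro h
      exact absurd (Finset.mem_univ d0) h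
  rw [← hc]
  exact coeff_eq_zero_of_mem_SRIdeal kk hΔ hpI _ (hDn _ d0.2)

lemma hilbertCoeff_SR (kk : Type*) [Field kk] {Δ : Set (Finset V)}
    (hΔ : ∀ s t : Finset V, s ⊆ t → t ∈ Δ → s ∈ Δ) (n : ℕ)
    (Dn : Finset (V →₀ ℕ))
    (hDn : ∀ d : V →₀ ℕ, d ∈ Dn ↔ Finsupp.degree d = n ∧ d.support ∈ Δ) :
    hilbertCoeff kk (SRIdeal kk Δ) n = Dn.card := by
  classical
  have hli := linearIndependent_mk_monomial kk hΔ Dn (fun d hd => ((hDn d).1 hd).2)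
  rw [hilbertCoeff, map_homog_eq_span kk n Dn hDn]
  rw [Set.image_eq_range]
  exact (finrank_span_eq_card hli).trans (Fintype.card_coe Dn)

end SRAux

namespace QuasiForest

variable {V : Type*} [DecidableEq V] {k : ℕ} (Q : QuasiForest V k)




/-- the face-exponents of degree n -/
noncomputable def D (n : ℕ) : Finset (V →₀ ℕ) :=
  (Finset.finsuppAntidiag Q.verts n).filter (fun d => ∃ i, d.support ⊆ Q.F i)

lemma F_subset_verts (i : Fin k) : Q.F i ⊆ Q.verts :=
  Finset.subset_biUnion_of_mem Q.F (Finset.mem_univ i)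

lemma G_subset_F (i : Fin k) : Q.G i ⊆ Q.F i := Finset.inter_subset_right

lemma mem_D (n : ℕ) (d : V →₀ ℕ) :
    d ∈ Q.D n ↔ (d.sum fun _ x => x) = n ∧ ∃ i, d.support ⊆ Q.F i := by
  classical
  rw [D, Finset.mem_filter, Finset.mem_finsuppAntidiag']
  constructor
  · rintro ⟨⟨h1, _⟩, h3⟩; exact ⟨h1, h3⟩
  · rintro ⟨h1, i, h2⟩
    exact ⟨⟨h1, h2.trans (Q.F_subset_verts i)⟩, ⟨i, h2⟩⟩

lemma count_face (s : Finset V) (hface : ∃ i, s ⊆ Q.F i) :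
    (Finset.univ.filter (fun i : Fin k => s ⊆ Q.F i)).card
      = (Finset.univ.filter (fun i : Fin k => 0 < (i : ℕ) ∧ s ⊆ Q.G i)).card + 1 := by
  classical
  set A := Finset.univ.filter (fun i : Fin k => s ⊆ Q.F i) with hA
  have hAne : A.Nonempty := by
    obtain ⟨i, hi⟩ := hface
    exact ⟨i, by simp [hA, hi]⟩
  set i0 := A.min' hAne with hi0
  have hi0A : i0 ∈ A := A.min'_mem hAne
  have hi0F : s ⊆ Q.F i0 := (Finset.mem_filter.1 hi0A).2
  have key : Finset.univ.filter (fun i : Fin k => 0 < (i : ℕ) ∧ s ⊆ Q.G i) = A.erase i0 := by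
    ext i
    simp only [Finset.mem_filter, Finset.mem_univ, true_and, Finset.mem_erase, hA]
    constructor
    · rintro ⟨hpos, hG⟩
      obtain ⟨j, hj, hsub⟩ := Q.attach i hpos
      have hsF : s ⊆ Q.F i := hG.trans (Q.G_subset_F i)
      have hsj : s ⊆ Q.F j := hG.trans hsub
      have hjA : j ∈ A := by simp [hA, hsj]
      have : i0 ≤ j := A.min'_le j hjA
      exact ⟨fun h => absurd (h ▸ hj) (not_lt.2 this), hsF⟩
    · rintro ⟨hne, hF⟩
      have hle : i0 ≤ i := A.min'_le i (by simp [hA, hF])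
      have hlt : i0 < i := lt_of_le_of_ne hle (fun h => hne h.symm)
      have hpos : 0 < (i : ℕ) := lt_of_le_of_lt (Nat.zero_le _) hlt
      refine ⟨hpos, Finset.subset_inter ?_ hF⟩
      exact hi0F.trans (Finset.subset_biUnion_of_mem Q.F (by simp [hlt]))
  rw [key, Finset.card_erase_of_mem hi0A]
  have : 1 ≤ A.card := Finset.card_pos.2 hAne
  omega

lemma antidiag_F_eq (n : ℕ) (i : Fin k) :
    Finset.finsuppAntidiag (Q.F i) n = (Q.D n).filter (fun d => d.support ⊆ Q.F i) := by
  classical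
  ext d
  rw [Finset.mem_filter, Finset.mem_finsuppAntidiag', Q.mem_D]
  constructor
  · rintro ⟨h1, h2⟩
    exact ⟨⟨h1, ⟨i, h2⟩⟩, h2⟩
  · rintro ⟨⟨h1, -⟩, h2⟩
    exact ⟨h1, h2⟩

lemma antidiag_G_eq (n : ℕ) (i : Fin k) :
    Finset.finsuppAntidiag (Q.G i) n = (Q.D n).filter (fun d => d.support ⊆ Q.G i) := by
  classical
  ext d
  rw [Finset.mem_filter, Finset.mem_finsuppAntidiag', Q.mem_D]
  constructor
  · rintro ⟨h1, h2⟩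
    exact ⟨⟨h1, ⟨i, h2.trans (Q.G_subset_F i)⟩⟩, h2⟩
  · rintro ⟨⟨h1, -⟩, h2⟩
    exact ⟨h1, h2⟩

lemma card_count (n : ℕ) :
    (∑ i : Fin k, (Finset.finsuppAntidiag (Q.F i) n).card)
      = (∑ i ∈ Finset.univ.filter (fun i : Fin k => 0 < (i : ℕ)),
          (Finset.finsuppAntidiag (Q.G i) n).card) + (Q.D n).card := by
  classical
  have hF : ∀ i : Fin k, (Finset.finsuppAntidiag (Q.F i) n).card
      = ∑ d ∈ Q.D n, if d.support ⊆ Q.F i then 1 else 0 := by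
    intro i; rw [antidiag_F_eq, Finset.card_filter]
  have hG : ∀ i : Fin k, (Finset.finsuppAntidiag (Q.G i) n).card
      = ∑ d ∈ Q.D n, if d.support ⊆ Q.G i then 1 else 0 := by
    intro i; rw [antidiag_G_eq, Finset.card_filter]
  simp only [hF, hG]
  rw [Finset.sum_comm, Finset.sum_comm (s := Finset.univ.filter _)]
  have step : ∀ d ∈ Q.D n,
      (∑ i : Fin k, if d.support ⊆ Q.F i then 1 else 0)
        = (∑ i ∈ Finset.univ.filter (fun i : Fin k => 0 < (i : ℕ)),
            if d.support ⊆ Q.G i then 1 else 0) + 1 := by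
    intro d hd
    have hface : ∃ i, d.support ⊆ Q.F i := ((Q.mem_D n d).1 hd).2
    have := Q.count_face d.support hface
    rw [← Finset.card_filter, ← Finset.card_filter] at *
    rw [show (Finset.univ.filter (fun i : Fin k => 0 < (i : ℕ))).filter
          (fun i => d.support ⊆ Q.G i)
        = Finset.univ.filter (fun i : Fin k => 0 < (i : ℕ) ∧ d.support ⊆ Q.G i) by
      rw [Finset.filter_filter]]
    exact this
  rw [Finset.sum_congr rfl step, Finset.sum_add_distrib, Finset.sum_const,
    smul_eq_mul, mul_one]

end QuasiForest


end HilbertAux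

open PowerSeries in
/-- the Hilbert series of the Stanley–Reisner ring of a quasi-forest
`F = F₁ ∪ ⋯ ∪ F_k` equals `∑ᵢ 1/(1-t)^(dᵢ+1) − ∑_{i≥2} 1/(1-t)^(rᵢ+1)`
(here `dᵢ + 1 = card (F i)` and `rᵢ + 1 = card (G i)`). -/
theorem hilbertSeries_quasiForest (kk : Type*) [Field kk] {V : Type*} [DecidableEq V]
    {k : ℕ} (hk : 1 ≤ k) (Q : QuasiForest V k) :
    hilbertSeries kk (SRIdeal kk Q.faces) =
      (∑ i : Fin k, ((1 - PowerSeries.X : PowerSeries ℚ))⁻¹ ^ (Q.F i).card) -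
      (∑ i ∈ Finset.univ.filter (fun i : Fin k => 0 < (i : ℕ)),
        ((1 - PowerSeries.X : PowerSeries ℚ))⁻¹ ^ (Q.G i).card) := by

  classical
  have hΔ : ∀ s t : Finset V, s ⊆ t → t ∈ Q.faces → s ∈ Q.faces := by
    rintro s t hst ⟨i, hti⟩
    exact ⟨i, hst.trans hti⟩
  have hcoeff : ∀ n : ℕ, hilbertCoeff kk (SRIdeal kk Q.faces) n = (Q.D n).card := by
    intro n
    apply hilbertCoeff_SR kk hΔ n (Q.D n)
    intro d
    rw [Q.mem_D]
    exact Iff.rfl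
  have hrw : ∀ s : Finset V, ((1 - PowerSeries.X : PowerSeries ℚ))⁻¹ ^ s.card = cnt s :=
    fun s => (cnt_eq s).symm
  ext n
  rw [hilbertSeries, PowerSeries.coeff_mk, hcoeff n]
  simp only [hrw]
  rw [map_sub, map_sum, map_sum]
  simp only [cnt, PowerSeries.coeff_mk]
  rw [eq_sub_iff_add_eq]
  have h := Q.card_count n
  rw [← Nat.cast_sum, ← Nat.cast_sum, ← Nat.cast_add, h, add_comm]
end

section
/- If a vertex v of a quasi-forest Δ with at least two facets belongs to facets F_{i_1},…,F_{i_k}, and r = min_i{r_i}, then the number of non-neighbours of v is at most n − (r + 2 + k − 1), where n is the number of vertices of Δ; consequently the degree of v in the complement of the 1-skeleton is at most n − r − 2, with equality only if k = 1 and the unique facet containing v has exactly r + 2 vertices. -/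
namespace QuasiForest

variable {V : Type*} [DecidableEq V] {k : ℕ} (Q : QuasiForest V k)

lemma minG_le {i : Fin k} (hi : 0 < (i : ℕ)) : Q.minG ≤ (Q.G i).card :=
  Nat.sInf_le ⟨i, hi, rfl⟩

lemma minG_lt_card (hk : 2 ≤ k) (i : Fin k) : Q.minG < (Q.F i).card := by
  classical
  by_cases h0 : 0 < (i : ℕ)
  · obtain ⟨j, hj, hsub⟩ := Q.attach i h0
    have hGF : Q.G i ⊆ Q.F i := Finset.inter_subset_right
    have hne : Q.G i ≠ Q.F i := by
      intro h
      exact Q.facet i j (ne_of_gt hj) (h ▸ hsub)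
    exact lt_of_le_of_lt (Q.minG_le h0) (Finset.card_lt_card (hGF.ssubset_of_ne hne))
  · have hi0 : (i : ℕ) = 0 := by omega
    have h1k : 1 < k := by omega
    set j1 : Fin k := ⟨1, h1k⟩ with hj1
    have hGsub : Q.G j1 ⊆ Q.F i := by
      intro x hx
      obtain ⟨hx1, _⟩ := Finset.mem_inter.mp hx
      obtain ⟨j, hjmem, hxj⟩ := Finset.mem_biUnion.mp hx1
      have hjlt : j < j1 := (Finset.mem_filter.mp hjmem).2
      have : j = i := by
        apply Fin.ext
        have : (j : ℕ) < 1 := hjlt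
        omega
      exact this ▸ hxj
    have hne : Q.G j1 ≠ Q.F i := by
      intro h
      have hij : i ≠ j1 := by
        intro h'
        have := congrArg Fin.val h'
        simp [hj1, hi0] at this
      exact Q.facet i j1 hij (h ▸ Finset.inter_subset_right)
    exact lt_of_le_of_lt (Q.minG_le (by simp [hj1])) (Finset.card_lt_card (hGsub.ssubset_of_ne hne))

lemma card_biUnion_ge (hk : 2 ≤ k) :
    ∀ S : Finset (Fin k), S.Nonempty → Q.minG + S.card ≤ (S.biUnion Q.F).card := by
  classical
  intro S
  induction S using Finset.strongInduction with
  | _ S ih =>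
    intro hS
    set j := S.max' hS with hjdef
    have hjS : j ∈ S := S.max'_mem hS
    set T := S.erase j with hTdef
    by_cases hT : T.Nonempty
    · have hlt : ∀ t ∈ T, t < j := fun t ht => S.lt_max'_of_mem_erase_max' hS ht
      have hxex : ¬ Q.F j ⊆ T.biUnion Q.F := by
        intro hsub
        have h0 : 0 < (j : ℕ) := by
          obtain ⟨t, ht⟩ := hT
          have := hlt t ht
          omega
        obtain ⟨j0, hj0, hsub0⟩ := Q.attach j h0
        have hFF : Q.F j ⊆ Q.F j0 := by
          intro x hxj
          apply hsub0
          refine Finset.mem_inter.mpr ⟨?_, hxj⟩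
          obtain ⟨t, htT, hxt⟩ := Finset.mem_biUnion.mp (hsub hxj)
          exact Finset.mem_biUnion.mpr
            ⟨t, Finset.mem_filter.mpr ⟨Finset.mem_univ t, hlt t htT⟩, hxt⟩
        exact Q.facet j j0 (ne_of_gt hj0) hFF
      obtain ⟨x, hxF, hxT⟩ := Finset.not_subset.mp hxex
      have hSins : S = insert j T := (Finset.insert_erase hjS).symm
      have hbU : S.biUnion Q.F = Q.F j ∪ T.biUnion Q.F := by
        rw [hSins, Finset.biUnion_insert]
      have hss : T.biUnion Q.F ⊂ S.biUnion Q.F := by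
        rw [hbU]
        refine Finset.ssubset_iff_of_subset Finset.subset_union_right |>.mpr ⟨x, ?_, hxT⟩
        exact Finset.mem_union_left _ hxF
      have hih := ih T (S.erase_ssubset hjS) hT
      have hc : T.card + 1 = S.card := by
        rw [hTdef, Finset.card_erase_of_mem hjS]
        have := Finset.card_pos.mpr hS
        omega
      have := Finset.card_lt_card hss
      omega
    · have hSsing : S = {j} := by
        apply Finset.eq_singleton_iff_unique_mem.mpr
        refine ⟨hjS, fun y hy => ?_⟩
        by_contra hne
        exact hT ⟨y, Finset.mem_erase.mpr ⟨hne, hy⟩⟩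
      rw [hSsing]
      simpa using Q.minG_lt_card hk j

end QuasiForest

/-- if a vertex `v` of a quasi-forest with at least two facets
belongs to exactly `m` facets, then its number of non-neighbours is at most
`n − (r + 2 + m − 1) = n − minG − m`; consequently its degree in the complement
of the 1-skeleton is at most `n − r − 2 = n − minG − 1`, with equality only if
`m = 1` and the unique facet containing `v` has exactly `r + 2 = minG + 1`
vertices. -/
theorem nonNbrs_le {V : Type*} [DecidableEq V] {k : ℕ}
    [Fintype V] (hk : 2 ≤ k) (Q : QuasiForest V k) (v : V) (hv : v ∈ Q.verts) :
    (Q.nonNbrs v).card ≤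
        Q.verts.card - Q.minG - (Finset.univ.filter (fun i : Fin k => v ∈ Q.F i)).card ∧
    (Q.nonNbrs v).card ≤ Q.verts.card - Q.minG - 1 ∧
    ((Q.nonNbrs v).card = Q.verts.card - Q.minG - 1 →
      (Finset.univ.filter (fun i : Fin k => v ∈ Q.F i)).card = 1 ∧
      ∀ i : Fin k, v ∈ Q.F i → (Q.F i).card = Q.minG + 1) := by
    classical
  set S := Finset.univ.filter (fun i : Fin k => v ∈ Q.F i) with hSdef
  set N := S.biUnion Q.F with hNdef
  have hvS : S.Nonempty := by
    obtain ⟨i, _, hvi⟩ := Finset.mem_biUnion.mp hv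
    exact ⟨i, Finset.mem_filter.mpr ⟨Finset.mem_univ i, hvi⟩⟩
  have hmemS : ∀ i : Fin k, i ∈ S ↔ v ∈ Q.F i := by
    intro i; simp [hSdef]
  have hNsub : N ⊆ Q.verts := by
    intro x hx
    obtain ⟨i, _, hxi⟩ := Finset.mem_biUnion.mp hx
    exact Finset.mem_biUnion.mpr ⟨i, Finset.mem_univ i, hxi⟩
  have hEq : Q.nonNbrs v = Q.verts \ N := by
    ext u
    simp only [QuasiForest.nonNbrs, Finset.mem_filter, Finset.mem_erase, Finset.mem_sdiff]
    constructor
    · rintro ⟨⟨hne, hu⟩, hface⟩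
      refine ⟨hu, fun hmem => ?_⟩
      obtain ⟨i, hiS, hui⟩ := Finset.mem_biUnion.mp hmem
      have hvi := (hmemS i).mp hiS
      refine hface ⟨i, ?_⟩
      intro x hx
      rcases Finset.mem_insert.mp hx with rfl | hx
      · exact hvi
      · exact (Finset.mem_singleton.mp hx) ▸ hui
    · rintro ⟨hu, hN⟩
      obtain ⟨i0, hi0⟩ := hvS
      have hvi0 := (hmemS i0).mp hi0
      have hne : u ≠ v := by
        rintro rfl
        exact hN (Finset.mem_biUnion.mpr ⟨i0, hi0, hvi0⟩)
      refine ⟨⟨hne, hu⟩, ?_⟩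
      rintro ⟨i, hsub⟩
      have hvi : v ∈ Q.F i := hsub (Finset.mem_insert_self _ _)
      have hui : u ∈ Q.F i := hsub (by simp)
      exact hN (Finset.mem_biUnion.mpr ⟨i, (hmemS i).mpr hvi, hui⟩)
  have hcard : (Q.nonNbrs v).card = Q.verts.card - N.card := by
    rw [hEq, Finset.card_sdiff_of_subset hNsub]
  have hLB : Q.minG + S.card ≤ N.card := Q.card_biUnion_ge hk S hvS
  have hUB : N.card ≤ Q.verts.card := Finset.card_le_card hNsub
  have hS1 : 1 ≤ S.card := hvS.card_pos
  refine ⟨by omega, by omega, fun heq => ?_⟩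
  have hN1 : N.card = Q.minG + 1 := by omega
  have hScard : S.card = 1 := by omega
  refine ⟨hScard, fun i hvi => ?_⟩
  have hiS : i ∈ S := (hmemS i).mpr hvi
  have hSsing : S = {i} := by
    obtain ⟨a, ha⟩ := Finset.card_eq_one.mp hScard
    rw [ha] at hiS ⊢
    rw [Finset.mem_singleton.mp hiS]
  have : N = Q.F i := by rw [hNdef, hSsing, Finset.singleton_biUnion]
  rw [← this, hN1]
end
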